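/- arXiv:2507.17069 — 2 statements merged into one kernel-verified Lean document; each statement's English description precedes it below -/
import Mathlib

section
/- Let λ > 0 and Y ∈ ℝ^{m×n}. For any singular value decomposition Y = U Σ Vᵀ, the matrix D_λ(Y) = U S_λ(Σ) Vᵀ, obtained by applying soft thresholding with parameter λ to each diagonal entry of Σ, is the unique minimizer over X ∈ ℝ^{m×n} of λ‖X‖_* + (1/2)‖X − Y‖_F². -/
open Matrix

/-- The soft thresholding operator with parameter `lam`. -/
noncomputable def soft (lam a : ℝ) : ℝ :=
  if a > lam then a - lam else if a < -lam then a + lam else 0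

/-- The nuclear norm of a real matrix: the sum of its singular values,
i.e. of the square roots of the eigenvalues of `AᴴA`. -/
noncomputable def nuclearNorm {m n : ℕ} (A : Matrix (Fin m) (Fin n) ℝ) : ℝ :=
  ∑ i, Real.sqrt ((Matrix.isHermitian_conjTranspose_mul_self A).eigenvalues i)

/-- The squared Frobenius norm of a real matrix. -/
def frobSq {m n : ℕ} (A : Matrix (Fin m) (Fin n) ℝ) : ℝ :=
  ∑ i, ∑ j, (A i j)^2

lemma soft_nonneg {lam a : ℝ} (hl : 0 < lam) (ha : 0 ≤ a) : 0 ≤ soft lam a := by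
  unfold soft; split_ifs <;> linarith

lemma soft_zero {lam : ℝ} (hl : 0 < lam) : soft lam 0 = 0 := by
  unfold soft; split_ifs <;> linarith

lemma soft_key {lam : ℝ} (hl : 0 < lam) {σ : ℝ} (hσ : 0 ≤ σ) (z : ℝ) :
    lam * |soft lam σ| + (soft lam σ - σ)^2/2 + (z - soft lam σ)^2/2
      ≤ lam * |z| + (z - σ)^2/2 := by
  have h1 : z ≤ |z| := le_abs_self z
  have h2 : -z ≤ |z| := neg_le_abs z
  unfold soft
  split_ifs with c1 c2
  · rw [abs_of_pos (by linarith)] ; nlinarith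
  · linarith
  · rw [abs_zero]; nlinarith [abs_nonneg z]

/-- diagonal entry extractor -/
def dEnt {m n : ℕ} (A : Matrix (Fin m) (Fin n) ℝ) (j : Fin n) : ℝ :=
  if h : (j : ℕ) < m then A ⟨j, h⟩ j else 0

lemma sum_ite_eq_dite {m n : ℕ} (j : Fin n) (f : Fin m → ℝ) :
    ∑ i : Fin m, (if (i : ℕ) = (j : ℕ) then f i else 0)
      = if h : (j : ℕ) < m then f ⟨j, h⟩ else 0 := by
  split_ifs with h
  · rw [Finset.sum_eq_single ⟨j, h⟩]
    · simp
    · intro i _ hi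
      rw [if_neg (by simpa [Fin.ext_iff] using hi)]
    · simp
  · apply Finset.sum_eq_zero
    intro i _
    rw [if_neg (by have := i.isLt; omega)]

lemma frobSq_split {m n : ℕ} (A : Matrix (Fin m) (Fin n) ℝ) :
    frobSq A = ∑ j, (dEnt A j)^2
      + ∑ i : Fin m, ∑ j : Fin n, (if (i : ℕ) = (j : ℕ) then 0 else (A i j)^2) := by
  have key : frobSq A = ∑ i : Fin m, ∑ j : Fin n, ((if (i:ℕ) = (j:ℕ) then (A i j)^2 else 0)
      + (if (i:ℕ) = (j:ℕ) then 0 else (A i j)^2)) := by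
    refine Finset.sum_congr rfl fun i _ => Finset.sum_congr rfl fun j _ => ?_
    split_ifs <;> ring
  rw [key]
  simp only [Finset.sum_add_distrib]
  congr 1
  rw [Finset.sum_comm]
  refine Finset.sum_congr rfl fun j _ => ?_
  rw [sum_ite_eq_dite j (fun i => (A i j)^2)]
  unfold dEnt
  split_ifs <;> simp

lemma sum_dite_le {n m : ℕ} (f : Fin m → ℝ) (hf : ∀ i, 0 ≤ f i) :
    ∑ j : Fin n, (if h : (j : ℕ) < m then f ⟨j, h⟩ else 0) ≤ ∑ i, f i := by
  set F : ℕ → ℝ := fun j => if h : j < m then f ⟨j, h⟩ else 0 with hF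
  have hFnn : ∀ j, 0 ≤ F j := by intro j; rw [hF]; dsimp; split_ifs; exacts [hf _, le_refl _]
  have h1 : ∑ j : Fin n, (if h : (j : ℕ) < m then f ⟨j, h⟩ else 0) = ∑ j ∈ Finset.range n, F j :=
    Fin.sum_univ_eq_sum_range F n
  have h2 : ∑ i, f i = ∑ j ∈ Finset.range m, F j := by
    rw [← Fin.sum_univ_eq_sum_range F m]
    refine Finset.sum_congr rfl fun i _ => ?_
    simp [hF, i.isLt]
  have h3 : ∑ j ∈ Finset.range m, F j = ∑ j ∈ Finset.range (max m n), F j := by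
    apply Finset.sum_subset
    · exact Finset.range_subset_range.mpr (le_max_left m n)
    · intro x _ hx
      rw [Finset.mem_range, not_lt] at hx
      rw [hF]; dsimp; rw [dif_neg (by omega)]
  rw [h1, h2, h3]
  exact Finset.sum_le_sum_of_subset_of_nonneg
    (Finset.range_subset_range.mpr (le_max_right m n)) (fun x _ _ => hFnn x)

section PSDSqrt
open scoped MatrixOrder

noncomputable def Matrix.PosSemidef.sqrt {n : ℕ} {A : Matrix (Fin n) (Fin n) ℝ}
    (_hA : PosSemidef A) : Matrix (Fin n) (Fin n) ℝ :=
  CFC.sqrt A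

lemma Matrix.PosSemidef.posSemidef_sqrt {n : ℕ} {A : Matrix (Fin n) (Fin n) ℝ}
    (hA : PosSemidef A) : PosSemidef hA.sqrt :=
  (CFC.sqrt_nonneg A).posSemidef

lemma Matrix.PosSemidef.sqrt_mul_self {n : ℕ} {A : Matrix (Fin n) (Fin n) ℝ}
    (hA : PosSemidef A) : hA.sqrt * hA.sqrt = A :=
  CFC.sqrt_mul_sqrt_self A hA.nonneg

lemma Matrix.PosSemidef.eq_sqrt_of_sq_eq {n : ℕ} {A : Matrix (Fin n) (Fin n) ℝ}
    (hA : PosSemidef A) {B : Matrix (Fin n) (Fin n) ℝ} (hB : PosSemidef B) (hAB : A ^ 2 = B) :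
    A = hB.sqrt :=
  (CFC.sqrt_unique (by rw [← sq]; exact hAB) hA.nonneg).symm

lemma Matrix.PosSemidef.sqrt_eq_cfc {n : ℕ} {A : Matrix (Fin n) (Fin n) ℝ}
    (hA : PosSemidef A) : hA.sqrt = hA.1.cfc Real.sqrt := by
  rw [Matrix.PosSemidef.sqrt, CFC.sqrt_eq_cfc, cfc_nnreal_eq_real _ A, hA.1.cfc_eq]
  congr 1
  funext x
  simp only [Real.coe_sqrt, Real.coe_toNNReal']
  rcases le_total 0 x with h | h
  · rw [max_eq_left h]
  · rw [max_eq_right h, Real.sqrt_zero, Real.sqrt_eq_zero_of_nonpos h]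

end PSDSqrt

lemma trace_sqrt {n : ℕ} {H : Matrix (Fin n) (Fin n) ℝ} (hH : PosSemidef H) :
    hH.sqrt.trace = ∑ i, Real.sqrt (hH.1.eigenvalues i) := by
  rw [Matrix.PosSemidef.sqrt_eq_cfc, Matrix.IsHermitian.cfc, Unitary.conjStarAlgAut_apply,
    Matrix.trace_mul_comm, ← Matrix.mul_assoc,
    Unitary.coe_star_mul_self, Matrix.one_mul, Matrix.trace_diagonal]
  simp [RCLike.ofReal]

lemma sqrt_congr {n : ℕ} {H K : Matrix (Fin n) (Fin n) ℝ} (h : H = K)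
    (hH : PosSemidef H) (hK : PosSemidef K) : hH.sqrt = hK.sqrt := by
  subst h; rfl

lemma nuclearNorm_eq_trace {m n : ℕ} (A : Matrix (Fin m) (Fin n) ℝ) :
    nuclearNorm A = (Matrix.posSemidef_conjTranspose_mul_self A).sqrt.trace := by
  rw [trace_sqrt]; rfl

lemma diag_le_nuclearNorm {m n : ℕ} (Z : Matrix (Fin m) (Fin n) ℝ) :
    ∑ j, |dEnt Z j| ≤ nuclearNorm Z := by
  set hH := Matrix.isHermitian_conjTranspose_mul_self Z with hHdef
  set Q : Matrix (Fin n) (Fin n) ℝ := hH.eigenvectorUnitary.1 with hQdef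
  have hQQs : Q * star Q = 1 := by
    exact hH.eigenvectorUnitary.2.2
  have hQsQ : star Q * Q = 1 := Unitary.coe_star_mul_self hH.eigenvectorUnitary
  set W : Matrix (Fin m) (Fin n) ℝ := Z * Q with hWdef
  have hZW : ∀ (i : Fin m) (j : Fin n), Z i j = ∑ k, W i k * Q j k := by
    intro i j
    have : Z = W * star Q := by
      rw [hWdef, Matrix.mul_assoc, hQQs, Matrix.mul_one]
    rw [this]
    simp [Matrix.mul_apply, Matrix.star_apply]
  have hcol : ∀ k, ∑ i, (W i k)^2 = hH.eigenvalues k := by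
    intro k
    have hWW : Wᴴ * W = diagonal (RCLike.ofReal ∘ hH.eigenvalues) := by
      rw [hWdef, Matrix.conjTranspose_mul, ← Matrix.star_eq_conjTranspose Q]
      calc star Q * Zᴴ * (Z * Q) = star Q * ((Zᴴ * Z) * Q) := by
            simp only [Matrix.mul_assoc]
        _ = _ := by
            conv_lhs => rw [hH.spectral_theorem, Unitary.conjStarAlgAut_apply]
            rw [Matrix.mul_assoc, Matrix.mul_assoc, hQsQ, Matrix.mul_one, ← Matrix.mul_assoc,
              hQsQ, Matrix.one_mul]
    have h1 : (Wᴴ * W) k k = hH.eigenvalues k := by rw [hWW]; simp [RCLike.ofReal]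
    rw [← h1]
    simp [Matrix.mul_apply, Matrix.conjTranspose_apply, sq]
  have hQcol : ∀ k, ∑ j, (Q j k)^2 = 1 := by
    intro k
    have h1 : (star Q * Q) k k = 1 := by rw [hQsQ]; simp
    rw [← h1]
    simp [Matrix.mul_apply, Matrix.star_apply, sq]
  -- pointwise bound
  have step1 : ∀ j : Fin n, |dEnt Z j|
      ≤ ∑ k, |(if h : (j:ℕ) < m then W ⟨j, h⟩ k else 0)| * |Q j k| := by
    intro j
    unfold dEnt
    split_ifs with h
    · rw [hZW ⟨j, h⟩ j]
      refine (Finset.abs_sum_le_sum_abs _ _).trans ?_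
      refine le_of_eq (Finset.sum_congr rfl fun k _ => ?_)
      rw [abs_mul]
    · simp only [abs_zero]
      positivity
  calc ∑ j, |dEnt Z j|
      ≤ ∑ j : Fin n, ∑ k : Fin n, |(if h : (j:ℕ) < m then W ⟨j, h⟩ k else 0)| * |Q j k| :=
        Finset.sum_le_sum fun j _ => step1 j
    _ = ∑ k : Fin n, ∑ j : Fin n, |(if h : (j:ℕ) < m then W ⟨j, h⟩ k else 0)| * |Q j k| :=
        Finset.sum_comm
    _ ≤ ∑ k, Real.sqrt (hH.eigenvalues k) := by
        refine Finset.sum_le_sum fun k _ => ?_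
        have cs := Finset.sum_mul_sq_le_sq_mul_sq Finset.univ
          (fun j : Fin n => |(if h : (j:ℕ) < m then W ⟨j, h⟩ k else 0)|) (fun j => |Q j k|)
        have hnn : (0:ℝ) ≤ ∑ j : Fin n, |(if h : (j:ℕ) < m then W ⟨j, h⟩ k else 0)| * |Q j k| := by
          positivity
        have h2 : ∑ j : Fin n, |(if h : (j:ℕ) < m then W ⟨j, h⟩ k else 0)|^2 ≤ hH.eigenvalues k := by
          rw [← hcol k]
          have : ∀ j : Fin n, |(if h : (j:ℕ) < m then W ⟨j, h⟩ k else 0)|^2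
              = (if h : (j:ℕ) < m then (W ⟨j, h⟩ k)^2 else 0) := by
            intro j; rw [sq_abs]; split_ifs <;> simp
          simp_rw [this]
          exact sum_dite_le (fun i => (W i k)^2) (fun i => sq_nonneg _)
        have h3 : ∑ j : Fin n, |Q j k|^2 = 1 := by
          simp_rw [sq_abs]; exact hQcol k
        calc ∑ j : Fin n, |(if h : (j:ℕ) < m then W ⟨j, h⟩ k else 0)| * |Q j k|
            = Real.sqrt ((∑ j : Fin n, |(if h : (j:ℕ) < m then W ⟨j, h⟩ k else 0)| * |Q j k|)^2) :=
              (Real.sqrt_sq hnn).symm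
          _ ≤ Real.sqrt (hH.eigenvalues k * 1) := by
              apply Real.sqrt_le_sqrt
              calc _ ≤ (∑ j : Fin n, |(if h : (j:ℕ) < m then W ⟨j, h⟩ k else 0)|^2)
                    * ∑ j : Fin n, |Q j k|^2 := cs
                _ ≤ hH.eigenvalues k * 1 := by
                    rw [h3]
                    have : (0:ℝ) ≤ ∑ j : Fin n, |(if h : (j:ℕ) < m then W ⟨j, h⟩ k else 0)|^2 := by
                      positivity
                    nlinarith [h2]
          _ = Real.sqrt (hH.eigenvalues k) := by rw [mul_one]

lemma transpose_mul_self_diag {m n : ℕ} (A : Matrix (Fin m) (Fin n) ℝ)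
    (hA : ∀ (i : Fin m) (j : Fin n), (i : ℕ) ≠ (j : ℕ) → A i j = 0) :
    Aᴴ * A = diagonal (fun j => (dEnt A j)^2) := by
  ext j k
  by_cases hjk : j = k
  · subst hjk
    simp only [Matrix.mul_apply, Matrix.conjTranspose_apply, star_trivial, diagonal_apply_eq]
    have : ∀ i : Fin m, A i j * A i j = (if (i:ℕ) = (j:ℕ) then (A i j)^2 else 0) := by
      intro i
      split_ifs with h
      · ring
      · rw [hA i j h]; ring
    rw [Finset.sum_congr rfl fun i _ => this i, sum_ite_eq_dite j (fun i => (A i j)^2)]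
    unfold dEnt
    split_ifs <;> simp
  · simp only [Matrix.mul_apply, Matrix.conjTranspose_apply, star_trivial,
      diagonal_apply_ne _ hjk]
    apply Finset.sum_eq_zero
    intro i _
    by_cases h : (i:ℕ) = (j:ℕ)
    · rw [hA i k (by rw [h]; exact fun hh => hjk (Fin.ext hh)), mul_zero]
    · rw [hA i j h, zero_mul]

lemma nuclearNorm_diag {m n : ℕ} (A : Matrix (Fin m) (Fin n) ℝ)
    (hA : ∀ (i : Fin m) (j : Fin n), (i : ℕ) ≠ (j : ℕ) → A i j = 0) :
    nuclearNorm A = ∑ j, |dEnt A j| := by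
  have hD : PosSemidef (diagonal (fun j : Fin n => |dEnt A j|)) :=
    posSemidef_diagonal_iff.mpr fun j => abs_nonneg _
  have hsq : (diagonal (fun j : Fin n => |dEnt A j|))^2 = Aᴴ * A := by
    rw [transpose_mul_self_diag A hA, pow_two, diagonal_mul_diagonal]
    refine congrArg diagonal (funext fun j => ?_)
    rw [← sq, sq_abs]
  rw [nuclearNorm_eq_trace,
    ← hD.eq_sqrt_of_sq_eq (Matrix.posSemidef_conjTranspose_mul_self A) hsq,
    Matrix.trace_diagonal]

lemma frobSq_diag {m n : ℕ} (A : Matrix (Fin m) (Fin n) ℝ)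
    (hA : ∀ (i : Fin m) (j : Fin n), (i : ℕ) ≠ (j : ℕ) → A i j = 0) :
    frobSq A = ∑ j, (dEnt A j)^2 := by
  rw [frobSq_split]
  have : ∑ i : Fin m, ∑ j : Fin n, (if (i : ℕ) = (j : ℕ) then 0 else (A i j)^2) = 0 := by
    apply Finset.sum_eq_zero; intro i _
    apply Finset.sum_eq_zero; intro j _
    split_ifs with h
    · rfl
    · rw [hA i j h]; ring
  rw [this, add_zero]


lemma frobSq_eq_trace {m n : ℕ} (A : Matrix (Fin m) (Fin n) ℝ) :
    frobSq A = (Aᵀ * A).trace := by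
  simp only [frobSq, Matrix.trace, Matrix.diag, Matrix.mul_apply, Matrix.transpose_apply, sq]
  exact Finset.sum_comm

variable {m n : ℕ} {U : Matrix (Fin m) (Fin m) ℝ} {V : Matrix (Fin n) (Fin n) ℝ}

lemma conj_unit (hU : Uᵀ * U = 1) (hV : Vᵀ * V = 1) (A : Matrix (Fin m) (Fin n) ℝ) :
    (U * A * Vᵀ)ᵀ * (U * A * Vᵀ) = V * (Aᵀ * A) * Vᵀ := by
  have : Vᵀᵀ = V := Matrix.transpose_transpose V
  simp only [Matrix.transpose_mul, this, ← Matrix.mul_assoc]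
  rw [Matrix.mul_assoc (V * Aᵀ) Uᵀ U, hU, Matrix.mul_one]

lemma frobSq_conj (hU : Uᵀ * U = 1) (hV : Vᵀ * V = 1) (A : Matrix (Fin m) (Fin n) ℝ) :
    frobSq (U * A * Vᵀ) = frobSq A := by
  rw [frobSq_eq_trace, frobSq_eq_trace, conj_unit hU hV, Matrix.trace_mul_comm,
    ← Matrix.mul_assoc, hV, Matrix.one_mul]

lemma nuclearNorm_conj (hU : Uᵀ * U = 1) (hV : Vᵀ * V = 1) (A : Matrix (Fin m) (Fin n) ℝ) :
    nuclearNorm (U * A * Vᵀ) = nuclearNorm A := by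
  have hVV : V * Vᵀ = 1 := mul_eq_one_comm.mp hV
  have hps : PosSemidef (Aᵀ * A) := by
    have := Matrix.posSemidef_conjTranspose_mul_self A
    rwa [Matrix.conjTranspose_eq_transpose_of_trivial] at this
  have hps2 : PosSemidef (V * hps.sqrt * Vᵀ) := by
    have := hps.posSemidef_sqrt.mul_mul_conjTranspose_same V
    rwa [Matrix.conjTranspose_eq_transpose_of_trivial] at this
  have hsq : (V * hps.sqrt * Vᵀ)^2 = V * (Aᵀ * A) * Vᵀ := by
    rw [pow_two]
    rw [show V * hps.sqrt * Vᵀ * (V * hps.sqrt * Vᵀ)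
        = V * hps.sqrt * (Vᵀ * V) * hps.sqrt * Vᵀ by simp only [Matrix.mul_assoc], hV,
      Matrix.mul_one, Matrix.mul_assoc V, hps.sqrt_mul_self, Matrix.mul_assoc]
  rw [nuclearNorm_eq_trace, nuclearNorm_eq_trace]
  have e1 : (Matrix.posSemidef_conjTranspose_mul_self (U * A * Vᵀ)).sqrt = V * hps.sqrt * Vᵀ := by
    have hVps : PosSemidef (V * (Aᵀ * A) * Vᵀ) := hsq ▸ hps2.pow 2
    rw [sqrt_congr (by rw [Matrix.conjTranspose_eq_transpose_of_trivial]; exact conj_unit hU hV A)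
      _ hVps]
    exact (hps2.eq_sqrt_of_sq_eq hVps hsq).symm
  have e2 : (Matrix.posSemidef_conjTranspose_mul_self A).sqrt = hps.sqrt := by
    apply sqrt_congr (by rw [Matrix.conjTranspose_eq_transpose_of_trivial])
  rw [e1, e2, Matrix.trace_mul_comm, ← Matrix.mul_assoc, hV, Matrix.one_mul]


lemma frobSq_nonneg {m n : ℕ} (A : Matrix (Fin m) (Fin n) ℝ) : 0 ≤ frobSq A := by
  unfold frobSq
  refine Finset.sum_nonneg fun i _ => Finset.sum_nonneg fun j _ => sq_nonneg _

lemma eq_zero_of_frobSq_eq_zero {m n : ℕ} {A : Matrix (Fin m) (Fin n) ℝ}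
    (h : frobSq A = 0) : A = 0 := by
  ext i j
  have h1 := (Finset.sum_eq_zero_iff_of_nonneg
    (fun i _ => Finset.sum_nonneg fun j _ => sq_nonneg (A i j))).mp h i (Finset.mem_univ i)
  have h2 := (Finset.sum_eq_zero_iff_of_nonneg
    (fun j _ => sq_nonneg (A i j))).mp h1 j (Finset.mem_univ j)
  simpa using pow_eq_zero_iff (n := 2) (by norm_num) |>.mp h2

lemma master {m n : ℕ} {lam : ℝ} (hlam : 0 < lam) (Sg : Matrix (Fin m) (Fin n) ℝ)
    (hSgDiag : ∀ (i : Fin m) (j : Fin n), (i : ℕ) ≠ (j : ℕ) → Sg i j = 0)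
    (hSgNonneg : ∀ i j, 0 ≤ Sg i j) (Z : Matrix (Fin m) (Fin n) ℝ) :
    lam * nuclearNorm (Sg.map (soft lam)) + frobSq (Sg.map (soft lam) - Sg)/2
      + frobSq (Z - Sg.map (soft lam))/2
    ≤ lam * nuclearNorm Z + frobSq (Z - Sg)/2 := by
  set M := Sg.map (soft lam) with hM
  have hMdiag : ∀ (i : Fin m) (j : Fin n), (i:ℕ) ≠ (j:ℕ) → M i j = 0 := by
    intro i j h; rw [hM, Matrix.map_apply, hSgDiag i j h, soft_zero hlam]
  have hMSdiag : ∀ (i : Fin m) (j : Fin n), (i:ℕ) ≠ (j:ℕ) → (M - Sg) i j = 0 := by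
    intro i j h; simp [Matrix.sub_apply, hMdiag i j h, hSgDiag i j h]
  have hdM : ∀ j, dEnt M j = soft lam (dEnt Sg j) := by
    intro j; unfold dEnt; split_ifs with h
    · rw [hM]; rfl
    · rw [soft_zero hlam]
  have hdSub : ∀ (A B : Matrix (Fin m) (Fin n) ℝ) j, dEnt (A - B) j = dEnt A j - dEnt B j := by
    intro A B j; unfold dEnt; split_ifs with h <;> simp [Matrix.sub_apply]
  have hσnn : ∀ j, 0 ≤ dEnt Sg j := by
    intro j; unfold dEnt; split_ifs; exacts [hSgNonneg _ _, le_refl 0]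
  have e1 : nuclearNorm M = ∑ j, |dEnt M j| := nuclearNorm_diag M hMdiag
  have e2 : frobSq (M - Sg) = ∑ j, (dEnt M j - dEnt Sg j)^2 := by
    rw [frobSq_diag _ hMSdiag]; exact Finset.sum_congr rfl fun j _ => by rw [hdSub]
  have e3 : frobSq (Z - M) = ∑ j, (dEnt Z j - dEnt M j)^2
      + ∑ i : Fin m, ∑ j : Fin n, (if (i:ℕ) = (j:ℕ) then 0 else ((Z - Sg) i j)^2) := by
    rw [frobSq_split]
    congr 1
    · exact Finset.sum_congr rfl fun j _ => by rw [hdSub]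
    · refine Finset.sum_congr rfl fun i _ => Finset.sum_congr rfl fun j _ => ?_
      split_ifs with h
      · rfl
      · rw [Matrix.sub_apply, Matrix.sub_apply, hMdiag i j h, hSgDiag i j h]
  have e4 : frobSq (Z - Sg) = ∑ j, (dEnt Z j - dEnt Sg j)^2
      + ∑ i : Fin m, ∑ j : Fin n, (if (i:ℕ) = (j:ℕ) then 0 else ((Z - Sg) i j)^2) := by
    rw [frobSq_split]
    congr 1
    exact Finset.sum_congr rfl fun j _ => by rw [hdSub]
  have fact2 : lam * ∑ j, |dEnt Z j| ≤ lam * nuclearNorm Z :=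
    mul_le_mul_of_nonneg_left (diag_le_nuclearNorm Z) hlam.le
  have key : ∑ j, (lam * |dEnt M j| + (dEnt M j - dEnt Sg j)^2/2 + (dEnt Z j - dEnt M j)^2/2)
      ≤ ∑ j, (lam * |dEnt Z j| + (dEnt Z j - dEnt Sg j)^2/2) := by
    refine Finset.sum_le_sum fun j _ => ?_
    rw [hdM j]
    exact soft_key hlam (hσnn j) (dEnt Z j)
  simp only [Finset.sum_add_distrib, ← Finset.mul_sum, ← Finset.sum_div] at key
  rw [e1, e2, e3, e4]
  linarith

/-- Singular value thresholding (Cai–Candès–Shen): for `λ > 0` and any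
singular value decomposition `Y = U Σ Vᵀ` (with `U`, `V` orthogonal and `Σ`
rectangular-diagonal with nonnegative entries), the matrix
`D_λ(Y) = U S_λ(Σ) Vᵀ`, obtained by soft thresholding the diagonal entries of
`Σ`, is the unique minimizer of `X ↦ λ‖X‖_* + (1/2)‖X - Y‖_F²`. -/
theorem singular_value_thresholding {m n : ℕ} (lam : ℝ) (hlam : 0 < lam)
    (Y : Matrix (Fin m) (Fin n) ℝ)
    (U : Matrix (Fin m) (Fin m) ℝ) (V : Matrix (Fin n) (Fin n) ℝ)
    (Sg : Matrix (Fin m) (Fin n) ℝ)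
    (hU : Uᵀ * U = 1) (hV : Vᵀ * V = 1)
    (hSgDiag : ∀ (i : Fin m) (j : Fin n), (i : ℕ) ≠ (j : ℕ) → Sg i j = 0)
    (hSgNonneg : ∀ i j, 0 ≤ Sg i j)
    (hY : Y = U * Sg * Vᵀ) :
    (∀ X : Matrix (Fin m) (Fin n) ℝ,
      lam * nuclearNorm (U * Sg.map (soft lam) * Vᵀ)
          + (1/2) * frobSq (U * Sg.map (soft lam) * Vᵀ - Y)
        ≤ lam * nuclearNorm X + (1/2) * frobSq (X - Y)) ∧
    (∀ X : Matrix (Fin m) (Fin n) ℝ,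
      lam * nuclearNorm X + (1/2) * frobSq (X - Y)
          ≤ lam * nuclearNorm (U * Sg.map (soft lam) * Vᵀ)
            + (1/2) * frobSq (U * Sg.map (soft lam) * Vᵀ - Y)
        → X = U * Sg.map (soft lam) * Vᵀ) := by
  have hUU : U * Uᵀ = 1 := mul_eq_one_comm.mp hU
  have hVV : V * Vᵀ = 1 := mul_eq_one_comm.mp hV
  set M := Sg.map (soft lam) with hM
  have repr : ∀ X : Matrix (Fin m) (Fin n) ℝ, X = U * (Uᵀ * X * V) * Vᵀ := by
    intro X
    calc X = (U*Uᵀ) * X * (V*Vᵀ) := by rw [hUU, hVV, Matrix.one_mul, Matrix.mul_one]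
    _ = _ := by simp only [Matrix.mul_assoc]
  have diff : ∀ (A B : Matrix (Fin m) (Fin n) ℝ), U*A*Vᵀ - U*B*Vᵀ = U*(A-B)*Vᵀ := by
    intro A B; rw [Matrix.mul_sub, Matrix.sub_mul]
  have main : ∀ X : Matrix (Fin m) (Fin n) ℝ,
      lam * nuclearNorm (U*M*Vᵀ) + (1/2) * frobSq (U*M*Vᵀ - Y)
        + (1/2) * frobSq (X - U*M*Vᵀ)
      ≤ lam * nuclearNorm X + (1/2) * frobSq (X - Y) := by
    intro X
    set Z := Uᵀ * X * V with hZ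
    have hXZ : X = U * Z * Vᵀ := repr X
    have h1 : nuclearNorm X = nuclearNorm Z := by
      conv_lhs => rw [hXZ]
      exact nuclearNorm_conj hU hV Z
    have h2 : frobSq (X - Y) = frobSq (Z - Sg) := by
      conv_lhs => rw [hXZ, hY, diff]
      exact frobSq_conj hU hV _
    have h3 : frobSq (X - U*M*Vᵀ) = frobSq (Z - M) := by
      conv_lhs => rw [hXZ, diff]
      exact frobSq_conj hU hV _
    have h4 : frobSq (U*M*Vᵀ - Y) = frobSq (M - Sg) := by
      conv_lhs => rw [hY, diff]
      exact frobSq_conj hU hV _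
    have h5 : nuclearNorm (U*M*Vᵀ) = nuclearNorm M := nuclearNorm_conj hU hV M
    rw [h1, h2, h3, h4, h5]
    have := master hlam Sg hSgDiag hSgNonneg Z
    linarith
  constructor
  · intro X
    have h := main X
    have hfnn : 0 ≤ frobSq (X - U*M*Vᵀ) := frobSq_nonneg _
    linarith
  · intro X hle
    have h := main X
    have hfnn : 0 ≤ frobSq (X - U*M*Vᵀ) := frobSq_nonneg _
    have hz : frobSq (X - U*M*Vᵀ) = 0 := le_antisymm (by linarith) hfnn
    have := eq_zero_of_frobSq_eq_zero hz
    exact sub_eq_zero.mp this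
end

section
/- Let d₁ ∈ 𝔽^{n₁} and d₂ ∈ 𝔽^{n₂} be vectors, let k₁, k₂ ≥ 1, set m_i = k_i n_i, and define L_i = I_{k_i} ⊗ diag(d_i) for i = 1, 2. Then the column-wise reshaping of the diagonal vector of L₂ ⊗ L₁ into an m₁ × m₂ matrix equals J_{k₁,k₂} ⊗ (d₁ d₂ᵀ), where J_{k₁,k₂} is the k₁ × k₂ all-ones matrix. That is, im_{m₁,m₂}(diag(L₂ ⊗ L₁)) is the block matrix with every block equal to the outer product d₁ d₂ᵀ. -/
open Matrix Kronecker

/-- `im m n x` is the column-wise reshaping of a vector `x` of length `n*m`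
into an `m × n` matrix: the `(i,j)` entry is entry number `(j-1)m + i` of `x`
(one-based), i.e. `x (i + m*j)` zero-based. -/
def im (m n : ℕ) {F : Type*} (x : Fin (n * m) → F) : Matrix (Fin m) (Fin n) F :=
  fun i j => x (finProdFinEquiv (j, i))

/-- Let `d₁ ∈ 𝔽^{n₁}`, `d₂ ∈ 𝔽^{n₂}`, `k₁, k₂ ≥ 1`, `m_i = k_i n_i`, and
`L_i = I_{k_i} ⊗ diag(d_i)` (realized on linear indices `Fin (k_i * n_i)` via
`finProdFinEquiv`). Then the column-wise reshaping of the diagonal of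
`L₂ ⊗ L₁` into an `m₁ × m₂` matrix is `J_{k₁,k₂} ⊗ (d₁ d₂ᵀ)`: the block matrix
all of whose `n₁ × n₂` blocks equal the outer product `d₁ d₂ᵀ`. -/
theorem im_diag_kron_of_block_diagonal {F : Type*} [Field F]
    {n₁ n₂ k₁ k₂ : ℕ} (hk₁ : 1 ≤ k₁) (hk₂ : 1 ≤ k₂)
    (d₁ : Fin n₁ → F) (d₂ : Fin n₂ → F) :
    im (k₁ * n₁) (k₂ * n₂)
      (Matrix.diag (Matrix.reindex finProdFinEquiv finProdFinEquiv
        ((Matrix.reindex finProdFinEquiv finProdFinEquiv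
            ((1 : Matrix (Fin k₂) (Fin k₂) F) ⊗ₖ Matrix.diagonal d₂))
          ⊗ₖ (Matrix.reindex finProdFinEquiv finProdFinEquiv
            ((1 : Matrix (Fin k₁) (Fin k₁) F) ⊗ₖ Matrix.diagonal d₁)))))
      = Matrix.reindex finProdFinEquiv finProdFinEquiv
          ((Matrix.of fun _ _ => (1 : F) : Matrix (Fin k₁) (Fin k₂) F)
            ⊗ₖ Matrix.vecMulVec d₁ d₂) := by
  ext i j
  obtain ⟨⟨a, b⟩, rfl⟩ := finProdFinEquiv.surjective i
  obtain ⟨⟨c, e⟩, rfl⟩ := finProdFinEquiv.surjective j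
  simp [im, Matrix.diag, Matrix.vecMulVec_apply, Matrix.one_apply, mul_comm,
    mul_left_comm]
end
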